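/- Let β ∈ (−1, 0) and ε ∈ {1, −1}. The function G(t) = ∫₀^t s^{β} e^{i ε s} ds is continuous on [0, ∞) and bounded: there exists C > 0 such that |G(t)| ≤ C for all t ≥ 0. -/

import Mathlib

open MeasureTheory Set Filter

private lemma intervalIntegrable_ofReal' {f : ℝ → ℝ} {a b : ℝ}
    (h : IntervalIntegrable f volume a b) :
    IntervalIntegrable (fun x => ((f x : ℝ) : ℂ)) volume a b :=
  ⟨h.1.ofReal, h.2.ofReal⟩

/-- Lemma 2.2 (the function `G`): for `β ∈ (-1,0)` and `ε = ±1`, the function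
`G(t) = ∫₀^t s^β e^{iεs} ds` is continuous on `[0,∞)` and bounded there. -/
theorem oscillating_dunkl_lemma_2_2_G
    (β : ℝ) (hβ : β ∈ Ioo (-1 : ℝ) 0) (ε : ℝ) (hε : ε = 1 ∨ ε = -1)
    (G : ℝ → ℂ)
    (hG : ∀ t : ℝ, G t = ∫ s in (0:ℝ)..t,
        ((s ^ β : ℝ) : ℂ) * Complex.exp (Complex.I * ((ε * s : ℝ) : ℂ))) :
    ContinuousOn G (Ici 0) ∧ ∃ C : ℝ, 0 < C ∧ ∀ t : ℝ, 0 ≤ t → ‖G t‖ ≤ C := by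
  obtain ⟨hβ1, hβ0⟩ := hβ
  set e : ℝ → ℂ := fun s => Complex.exp (Complex.I * ((ε * s : ℝ) : ℂ)) with he
  set f : ℝ → ℂ := fun s => ((s ^ β : ℝ) : ℂ) * e s with hfdef
  have he_cont : Continuous e := by
    apply Complex.continuous_exp.comp
    exact continuous_const.mul (Complex.continuous_ofReal.comp (continuous_const.mul continuous_id))
  have he_norm : ∀ s : ℝ, ‖e s‖ = 1 := by
    intro s
    simp [he, Complex.norm_exp]
  have hInt : ∀ a b : ℝ, IntervalIntegrable f volume a b := fun a b =>
    (intervalIntegrable_ofReal'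
      (intervalIntegral.intervalIntegrable_rpow' hβ1)).mul_continuousOn he_cont.continuousOn
  -- continuity
  have hcont : ContinuousOn G (Ici 0) := by
    have := (intervalIntegral.continuous_primitive hInt 0).continuousOn (s := Ici (0:ℝ))
    refine ContinuousOn.congr this fun t _ => ?_
    rw [hG t]
  refine ⟨hcont, ?_⟩
  have hβ1' : (0:ℝ) < β + 1 := by linarith
  -- norm of f
  have hnormf : ∀ s : ℝ, 0 ≤ s → ‖f s‖ = s ^ β := by
    intro s hs
    rw [hfdef]
    simp only [norm_mul, he_norm, mul_one, Complex.norm_real, Real.norm_eq_abs]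
    exact abs_of_nonneg (Real.rpow_nonneg hs β)
  -- bound for 0 ≤ t ≤ 1
  have bound01 : ∀ t : ℝ, 0 ≤ t → t ≤ 1 → ‖∫ s in (0:ℝ)..t, f s‖ ≤ 1 / (β + 1) := by
    intro t ht ht1
    calc ‖∫ s in (0:ℝ)..t, f s‖ ≤ ∫ s in (0:ℝ)..t, ‖f s‖ :=
          intervalIntegral.norm_integral_le_integral_norm ht
      _ = ∫ s in (0:ℝ)..t, s ^ β := by
          refine intervalIntegral.integral_congr fun s hs => ?_
          rw [uIcc_of_le ht] at hs
          exact hnormf s hs.1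
      _ = (t ^ (β + 1) - 0 ^ (β + 1)) / (β + 1) := integral_rpow (Or.inl hβ1)
      _ ≤ 1 / (β + 1) := by
          rw [Real.zero_rpow (ne_of_gt hβ1'), sub_zero]
          gcongr
          exact Real.rpow_le_one ht ht1 hβ1'.le
  -- the constant c = I * ε
  set c : ℂ := Complex.I * (ε : ℂ) with hc
  have hε2 : (ε : ℂ) * (ε : ℂ) = 1 := by rcases hε with h | h <;> norm_num [h]
  have hc2 : c * c = -1 := by
    have : c * c = Complex.I * Complex.I * ((ε : ℂ) * (ε : ℂ)) := by rw [hc]; ring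
    rw [this, Complex.I_mul_I, hε2, neg_one_mul]
  have hcnorm : ‖c‖ = 1 := by
    rcases hε with h | h <;> simp [hc, h]
  -- derivative of the exponential factor
  have hexp_deriv : ∀ s : ℝ, HasDerivAt e (c * e s) s := by
    intro s
    have h1 : HasDerivAt (fun s : ℝ => ε * s) ε s := by
      simpa using (hasDerivAt_id s).const_mul ε
    have h2 := h1.ofReal_comp
    have h3 := h2.const_mul Complex.I
    have h4 := h3.cexp
    simpa [he, hc, mul_comm] using h4
  -- tail bound by integration by parts
  have tail : ∀ t : ℝ, 1 ≤ t → ‖∫ s in (1:ℝ)..t, f s‖ ≤ 3 := by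
    intro t ht
    set F : ℝ → ℂ := fun s => -c * (((s ^ β : ℝ) : ℂ) * e s) with hF
    set g : ℝ → ℂ := fun s => ((s ^ (β - 1) : ℝ) : ℂ) * e s with hg
    have hmem : ∀ s ∈ uIcc (1:ℝ) t, 1 ≤ s := by
      intro s hs
      rw [uIcc_of_le ht] at hs
      exact hs.1
    -- continuity of rpow-products on [1,t]
    have hcontOn : ∀ γ : ℝ, ContinuousOn (fun s : ℝ => ((s ^ γ : ℝ) : ℂ) * e s) (uIcc (1:ℝ) t) := by
      intro γ
      refine ContinuousOn.mul ?_ he_cont.continuousOn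
      refine Complex.continuous_ofReal.comp_continuousOn fun s hs => ?_
      exact (Real.continuousAt_rpow_const s γ
        (Or.inl (by have := hmem s hs; positivity))).continuousWithinAt
    have hderiv : ∀ s ∈ uIcc (1:ℝ) t, HasDerivAt F (f s + (-c * β) * g s) s := by
      intro s hs
      have hs1 : s ≠ 0 := by have := hmem s hs; positivity
      have hr : HasDerivAt (fun s : ℝ => ((s ^ β : ℝ) : ℂ)) ((β * s ^ (β - 1) : ℝ) : ℂ) s :=
        (Real.hasDerivAt_rpow_const (Or.inl hs1)).ofReal_comp
      have hd := ((hr.mul (hexp_deriv s)).const_mul (-c))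
      refine hd.congr_deriv (Eq.symm ?_)
      rw [hfdef, hg]
      push_cast
      linear_combination ((s ^ β : ℝ) : ℂ) * e s * hc2
    have hf_int : IntervalIntegrable f volume 1 t := hInt 1 t
    have hg_int : IntervalIntegrable g volume 1 t := (hcontOn (β - 1)).intervalIntegrable
    have hint2 : IntervalIntegrable (fun s => f s + (-c * β) * g s) volume 1 t :=
      hf_int.add (hg_int.const_mul _)
    have key : (∫ s in (1:ℝ)..t, (f s + (-c * β) * g s)) = F t - F 1 :=
      intervalIntegral.integral_eq_sub_of_hasDerivAt hderiv hint2
    have split : (∫ s in (1:ℝ)..t, (f s + (-c * β) * g s)) =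
        (∫ s in (1:ℝ)..t, f s) + (-c * β) * ∫ s in (1:ℝ)..t, g s := by
      rw [intervalIntegral.integral_add hf_int (hg_int.const_mul _),
        intervalIntegral.integral_const_mul]
    have hfeq : (∫ s in (1:ℝ)..t, f s) = F t - F 1 - (-c * β) * ∫ s in (1:ℝ)..t, g s := by
      rw [← key, split]; ring
    -- bound each piece
    have hFnorm : ∀ s : ℝ, 1 ≤ s → ‖F s‖ ≤ 1 := by
      intro s hs
      have : ‖F s‖ = s ^ β := by
        rw [hF]
        simp only [norm_mul, norm_neg, hcnorm, he_norm, mul_one, one_mul,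
          Complex.norm_real, Real.norm_eq_abs]
        exact abs_of_nonneg (Real.rpow_nonneg (by linarith) β)
      rw [this]
      exact Real.rpow_le_one_of_one_le_of_nonpos hs hβ0.le
    have hgint_norm : ‖∫ s in (1:ℝ)..t, g s‖ ≤ 1 / (-β) := by
      calc ‖∫ s in (1:ℝ)..t, g s‖ ≤ ∫ s in (1:ℝ)..t, ‖g s‖ :=
            intervalIntegral.norm_integral_le_integral_norm ht
        _ = ∫ s in (1:ℝ)..t, s ^ (β - 1) := by
            refine intervalIntegral.integral_congr fun s hs => ?_
            have h1 := hmem s hs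
            rw [hg]
            simp only [norm_mul, he_norm, mul_one, Complex.norm_real, Real.norm_eq_abs]
            exact abs_of_nonneg (Real.rpow_nonneg (by linarith) _)
        _ = (t ^ (β - 1 + 1) - 1 ^ (β - 1 + 1)) / (β - 1 + 1) := by
            refine integral_rpow (Or.inr ⟨by intro h; rw [sub_eq_iff_eq_add] at h; norm_num at h; linarith, ?_⟩)
            rw [uIcc_of_le ht]
            rintro ⟨h0, -⟩
            linarith
        _ ≤ 1 / (-β) := by
            rw [sub_add_cancel, Real.one_rpow]
            have htβ : 0 ≤ t ^ β := Real.rpow_nonneg (by linarith) β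
            calc (t ^ β - 1) / β = (1 - t ^ β) / (-β) := by
                  rw [← neg_div_neg_eq, neg_sub]
              _ ≤ 1 / (-β) := by gcongr <;> linarith
    calc ‖∫ s in (1:ℝ)..t, f s‖
        ≤ ‖F t‖ + ‖F 1‖ + ‖(-c * β) * ∫ s in (1:ℝ)..t, g s‖ := by
          rw [hfeq]
          exact (norm_sub_le _ _).trans (by gcongr; exact norm_sub_le _ _)
      _ ≤ 1 + 1 + 1 := by
          have hlast : ‖(-c * (β:ℂ)) * ∫ s in (1:ℝ)..t, g s‖ ≤ 1 := by
            rw [norm_mul, norm_mul, norm_neg, hcnorm, one_mul, Complex.norm_real,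
              Real.norm_eq_abs, abs_of_neg hβ0]
            calc -β * ‖∫ s in (1:ℝ)..t, g s‖ ≤ -β * (1 / (-β)) :=
                  mul_le_mul_of_nonneg_left hgint_norm (by linarith)
              _ = 1 := by rw [mul_one_div, div_self (by linarith : (-β) ≠ 0)]
          exact add_le_add (add_le_add (hFnorm t ht) (hFnorm 1 le_rfl)) hlast
      _ = 3 := by norm_num
  refine ⟨1 / (β + 1) + 3, by positivity, fun t ht => ?_⟩
  rcases le_total t 1 with h1 | h1
  · have := bound01 t ht h1
    rw [hG t]
    have h3 : (0:ℝ) ≤ 3 := by norm_num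
    linarith [bound01 t ht h1]
  · rw [hG t, ← intervalIntegral.integral_add_adjacent_intervals (hInt 0 1) (hInt 1 t)]
    calc ‖(∫ s in (0:ℝ)..1, f s) + ∫ s in (1:ℝ)..t, f s‖
        ≤ ‖∫ s in (0:ℝ)..1, f s‖ + ‖∫ s in (1:ℝ)..t, f s‖ := norm_add_le _ _
      _ ≤ 1 / (β + 1) + 3 := add_le_add (bound01 1 zero_le_one le_rfl) (tail t h1)
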